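/- Let w : U → ℂ be holomorphic with w(0) = 0, |w(z)| < 1 and w'(z) ≠ 0 on U, let a_k denote the k-th Taylor coefficient of w at 0, set a = (a_1,…,a_n) ∈ ℂ^n, and let q_k denote the k-th Taylor coefficient at 0 of the holomorphic function z ↦ z/w'(z), with q = (q_1,…,q_n) ∈ ℂ^n. Then for every u ∈ ℝ and every k with 1 ≤ k ≤ n, the k-th Taylor coefficient at 0 of z ↦ (z/w'(z)) · [ (e^{iu}+w(z))/(e^{iu}−w(z)) + 2e^{iu}w(z)/(e^{iu}−w(z))² ] equals q_k + 2∑_{s=1}^{k−1} e^{−isu}(s+1)(A(a)^s q)_k. (Consequently, along the Löwner flow the coefficient vector q(t) of z/∂_z w(z,t) satisfies the linear system q̇ = (E + 2∑_{s=1}^{n−1} e^{−isu(t)}(s+1) A(a(t))^s) q.) -/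

import Mathlib

open Complex Metric
open FormalMultilinearSeries

/-- The `k`-th Taylor coefficient of `f` at `0`. -/
noncomputable def taylorCoeff (f : ℂ → ℂ) (k : ℕ) : ℂ :=
  iteratedDeriv k f 0 / Nat.factorial k

/-- The lower-triangular nilpotent Toeplitz matrix `A(a)` with `A(a)_{j,k} = a_{j-k}`
(1-indexed) for `j > k` and `0` otherwise. -/
noncomputable def toeplitzA {n : ℕ} (a : Fin n → ℂ) : Matrix (Fin n) (Fin n) ℂ :=
  Matrix.of fun j k =>
    if _ : (k : ℕ) < (j : ℕ) then a ⟨(j : ℕ) - (k : ℕ) - 1, by have := j.isLt; omega⟩ else 0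

/-- The Löwner kernel `p(ζ, u) = (e^{iu} + ζ)/(e^{iu} - ζ)`. -/
noncomputable def lkernel (ζ : ℂ) (u : ℝ) : ℂ :=
  (Complex.exp (u * Complex.I) + ζ) / (Complex.exp (u * Complex.I) - ζ)

def HT (f : ℂ → ℂ) (c : ℕ → ℂ) : Prop :=
  HasFPowerSeriesAt f (FormalMultilinearSeries.ofScalars ℂ c) 0

lemma ofScalars_coeff (c : ℕ → ℂ) (n : ℕ) : (ofScalars ℂ c).coeff n = c n := by
  simp [FormalMultilinearSeries.coeff, FormalMultilinearSeries.ofScalars, List.prod_ofFn]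

lemma HT_iff {f : ℂ → ℂ} {c : ℕ → ℂ} :
    HT f c ↔ ∀ᶠ z in nhds (0:ℂ), HasSum (fun n => c n * z ^ n) (f z) := by
  rw [HT, hasFPowerSeriesAt_iff]
  apply Filter.eventually_congr
  filter_upwards with z
  simp [ofScalars_coeff, smul_eq_mul, mul_comm]

lemma HT.taylorCoeff_eq {f : ℂ → ℂ} {c : ℕ → ℂ} (h : HT f c) (k : ℕ) :
    taylorCoeff f k = c k := by
  obtain ⟨r, hr⟩ := h
  have h1 := hr.factorial_smul (1 : ℂ) k
  rw [← iteratedDeriv_eq_iteratedFDeriv] at h1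
  have h2 : (ofScalars ℂ c k fun _ => (1:ℂ)) = c k := by
    simp [FormalMultilinearSeries.ofScalars]
  rw [h2] at h1
  rw [taylorCoeff, ← h1]
  rw [nsmul_eq_mul]
  field_simp [Nat.factorial_ne_zero]

lemma HT.exists_radius {f : ℂ → ℂ} {c : ℕ → ℂ} (h : HT f c) :
    ∃ r : ℝ, 0 < r ∧ (Summable fun n => ‖c n‖ * r ^ n) ∧
      ∀ z : ℂ, ‖z‖ < r → HasSum (fun n => c n * z ^ n) (f z) := by
  obtain ⟨r₀, hr₀⟩ := h
  obtain ⟨r, hr0, hrr⟩ := ENNReal.lt_iff_exists_nnreal_btwn.mp hr₀.r_pos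
  refine ⟨r, by exact_mod_cast hr0, ?_, ?_⟩
  · have hs := (ofScalars ℂ c).summable_norm_mul_pow (hrr.trans_le hr₀.r_le)
    exact hs.congr fun n => by rw [ofScalars_norm]
  · intro z hz
    have hz' : z ∈ EMetric.ball (0:ℂ) r₀ := by
      refine lt_of_lt_of_le ?_ hrr.le
      rw [edist_zero_right]
      exact_mod_cast (by rw [← NNReal.coe_lt_coe, coe_nnnorm]; exact hz : ‖z‖₊ < r)
    have := hr₀.hasSum hz'
    simp only [zero_add] at this
    refine this.congr_fun fun n => ?_
    simp [FormalMultilinearSeries.ofScalars, List.prod_ofFn, mul_comm]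

lemma HT.mul {f g : ℂ → ℂ} {cf cg : ℕ → ℂ} (hf : HT f cf) (hg : HT g cg) :
    HT (fun z => f z * g z)
      (fun n => ∑ i ∈ Finset.range (n+1), cf i * cg (n - i)) := by
  obtain ⟨rf, hrf0, hrfs, hrf⟩ := hf.exists_radius
  obtain ⟨rg, hrg0, hrgs, hrg⟩ := hg.exists_radius
  rw [HT_iff]
  have hmem : Metric.ball (0:ℂ) (min rf rg) ∈ nhds (0:ℂ) :=
    Metric.ball_mem_nhds _ (lt_min hrf0 hrg0)
  filter_upwards [hmem] with z hz
  rw [Metric.mem_ball, dist_zero_right, lt_min_iff] at hz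
  have hsf : Summable fun n => ‖cf n * z ^ n‖ := by
    refine Summable.of_nonneg_of_le (fun n => norm_nonneg _) (fun n => ?_) hrfs
    rw [norm_mul, norm_pow]
    exact mul_le_mul_of_nonneg_left (pow_le_pow_left₀ (norm_nonneg _) hz.1.le n)
      (norm_nonneg _)
  have hsg : Summable fun n => ‖cg n * z ^ n‖ := by
    refine Summable.of_nonneg_of_le (fun n => norm_nonneg _) (fun n => ?_) hrgs
    rw [norm_mul, norm_pow]
    exact mul_le_mul_of_nonneg_left (pow_le_pow_left₀ (norm_nonneg _) hz.2.le n)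
      (norm_nonneg _)
  have hS := hasSum_sum_range_mul_of_summable_norm hsf hsg
  rw [(hrf z hz.1).tsum_eq, (hrg z hz.2).tsum_eq] at hS
  refine hS.congr_fun fun n => ?_
  rw [Finset.sum_mul]
  refine Finset.sum_congr rfl fun i hi => ?_
  rw [Finset.mem_range] at hi
  have : i + (n - i) = n := by omega
  calc cf i * cg (n-i) * z ^ n
      = cf i * cg (n-i) * (z ^ i * z ^ (n-i)) := by rw [← pow_add, this]
    _ = cf i * z ^ i * (cg (n-i) * z ^ (n-i)) := by ring

lemma HT.add {f g : ℂ → ℂ} {cf cg : ℕ → ℂ} (hf : HT f cf) (hg : HT g cg) :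
    HT (fun z => f z + g z) (fun n => cf n + cg n) := by
  rw [HT_iff] at hf hg ⊢
  filter_upwards [hf, hg] with z h1 h2
  simpa [add_mul] using h1.add h2

lemma HT.const_mul {f : ℂ → ℂ} {cf : ℕ → ℂ} (a : ℂ) (hf : HT f cf) :
    HT (fun z => a * f z) (fun n => a * cf n) := by
  rw [HT_iff] at hf ⊢
  filter_upwards [hf] with z h1
  simpa [mul_assoc] using h1.mul_left a

lemma HT.finset_sum {α : Type*} (S : Finset α) (F : α → ℂ → ℂ) (cF : α → ℕ → ℂ)
    (h : ∀ s ∈ S, HT (F s) (cF s)) :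
    HT (fun z => ∑ s ∈ S, F s z) (fun n => ∑ s ∈ S, cF s n) := by
  rw [HT_iff]
  have : ∀ᶠ z in nhds (0:ℂ), ∀ s ∈ S, HasSum (fun n => cF s n * z ^ n) (F s z) := by
    rw [Filter.eventually_all_finset]
    intro s hs
    exact HT_iff.mp (h s hs)
  filter_upwards [this] with z hz
  simpa [Finset.sum_mul] using hasSum_sum (fun s hs => hz s hs)

lemma HT.congr {f g : ℂ → ℂ} {c : ℕ → ℂ} (h : HT f c) (hfg : f =ᶠ[nhds 0] g) :
    HT g c := HasFPowerSeriesAt.congr h hfg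

lemma AnalyticAt.ht {f : ℂ → ℂ} (hf : AnalyticAt ℂ f 0) :
    HT f (fun n => taylorCoeff f n) := by
  obtain ⟨p, hp⟩ := hf
  have hps : ofScalars ℂ (fun n => p.coeff n) = p := by
    ext1 n
    refine ContinuousMultilinearMap.ext fun m => ?_
    rw [← p.mkPiRing_coeff_eq n]
    simp [FormalMultilinearSeries.ofScalars, List.prod_ofFn, smul_eq_mul, mul_comm]
  have hT : HT f (fun n => p.coeff n) := by rw [HT, hps]; exact hp
  have : (fun n => taylorCoeff f n) = fun n => p.coeff n := by
    funext n; exact hT.taylorCoeff_eq n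
  rw [this]
  exact hT

lemma polyid (K : ℕ) (x : ℂ) :
    (∑ s ∈ Finset.range (K+1), ((s:ℂ)+1) * x^s) * (1-x)^2
      = 1 - x^(K+1) * (((K:ℂ)+2) - ((K:ℂ)+1)*x) := by
  induction K with
  | zero => simp; ring
  | succ K ih =>
    rw [Finset.sum_range_succ, add_mul, ih]
    push_cast
    ring

lemma bracket_aux (K : ℕ) (c x : ℂ) (hc : c ≠ 0) (h1x : (1:ℂ) - x ≠ 0) :
    (c + c*x)/(c - c*x) + 2*c*(c*x)/(c - c*x)^2
      = 1 + (2 * (∑ s ∈ Finset.range (K+1), ((s:ℂ)+1) * x^s) - 2)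
        + 2*c⁻¹^(K+1)*(c*x)^(K+1)*((((K:ℂ)+2) - ((K:ℂ)+1)*x) * ((1-x)⁻¹)^2) := by
  have hpoly := polyid K x
  have hP : (∑ s ∈ Finset.range (K+1), ((s:ℂ)+1) * x^s)
      = (1 - x^(K+1) * (((K:ℂ)+2) - ((K:ℂ)+1)*x)) / (1 - x)^2 := by
    rw [← hpoly]
    field_simp
  have hcc : c - c*x ≠ 0 := by
    have : c - c*x = c * (1-x) := by ring
    rw [this]
    exact mul_ne_zero hc h1x
  rw [hP]
  have hcpow : c⁻¹^(K+1) * (c*x)^(K+1) = x^(K+1) := by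
    rw [mul_pow, ← mul_assoc, ← mul_pow, inv_mul_cancel₀ hc, one_pow, one_mul]
  rw [mul_assoc (2:ℂ) (c⁻¹^(K+1)) ((c*x)^(K+1)), hcpow]
  field_simp
  ring

lemma bracket_eq (K : ℕ) (u : ℝ) (t : ℂ) (ht : ‖t‖ < 1) :
    lkernel t u + 2 * Complex.exp ((u:ℂ) * Complex.I) * t /
        (Complex.exp ((u:ℂ) * Complex.I) - t) ^ 2
      = 1 + (∑ s ∈ Finset.Icc 1 K, (2 * ((s:ℂ)+1) * (Complex.exp ((u:ℂ)*Complex.I))⁻¹ ^ s) * t ^ s)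
        + (2 * (Complex.exp ((u:ℂ)*Complex.I))⁻¹ ^ (K+1)) * t ^ (K+1) *
          ((((K:ℂ)+2) - ((K:ℂ)+1) * (t * (Complex.exp ((u:ℂ)*Complex.I))⁻¹)) *
            ((1 - t * (Complex.exp ((u:ℂ)*Complex.I))⁻¹)⁻¹) ^ 2) := by
  set c := Complex.exp ((u:ℂ) * Complex.I) with hcdef
  have hc : c ≠ 0 := Complex.exp_ne_zero _
  have hcabs : ‖c‖ = 1 := by
    rw [hcdef, Complex.norm_exp]
    simp
  set x : ℂ := t * c⁻¹ with hxdef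
  have hct : c * x = t := by
    rw [hxdef]
    field_simp
  have h1x : (1 : ℂ) - x ≠ 0 := by
    intro h
    rw [sub_eq_zero] at h
    have : t = c := by rw [← hct, ← h, mul_one]
    rw [this] at ht
    simp [hcabs] at ht
  have hsum : (∑ s ∈ Finset.Icc 1 K, (2 * ((s:ℂ)+1) * c⁻¹ ^ s) * t ^ s)
      = 2 * (∑ s ∈ Finset.range (K+1), ((s:ℂ)+1) * x ^ s) - 2 := by
    rw [Finset.sum_range_succ', ← Finset.Ico_add_one_right_eq_Icc, Finset.sum_Ico_eq_sum_range]
    simp only [Nat.add_sub_cancel, pow_zero, Nat.cast_zero, zero_add, one_mul, mul_one]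
    rw [mul_add, Finset.mul_sum]
    push_cast
    rw [add_sub_assoc]
    norm_num
    refine Finset.sum_congr rfl fun i _ => ?_
    rw [hxdef, mul_pow]
    field_simp
    have hci : c * c ^ i * c⁻¹ * c⁻¹ ^ i = 1 := by rw [inv_pow]; field_simp
    linear_combination (-((i:ℂ) * t * t ^ i + t * t ^ i * 2)) * hci
  rw [hsum, lkernel, ← hcdef, ← hct]
  exact bracket_aux K c x hc h1x

noncomputable def convSeq (a b : ℕ → ℂ) (n : ℕ) : ℂ :=
  ∑ i ∈ Finset.range (n+1), a i * b (n - i)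

noncomputable def csAux (ca ch : ℕ → ℂ) : ℕ → ℕ → ℂ
  | 0 => ch
  | s+1 => convSeq ca (csAux ca ch s)

lemma HT.mul' {f g : ℂ → ℂ} {cf cg : ℕ → ℂ} (hf : HT f cf) (hg : HT g cg) :
    HT (fun z => f z * g z) (convSeq cf cg) := hf.mul hg

lemma csAux_eq_zero (ca ch : ℕ → ℂ) (ha0 : ca 0 = 0) (hh0 : ch 0 = 0) :
    ∀ s m, m ≤ s → csAux ca ch s m = 0 := by
  intro s
  induction s with
  | zero => intro m hm; interval_cases m; exact hh0
  | succ s ih =>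
    intro m hm
    show convSeq ca (csAux ca ch s) m = 0
    rw [convSeq]
    refine Finset.sum_eq_zero fun i hi => ?_
    rcases Nat.eq_zero_or_pos i with h0 | h0
    · rw [h0, ha0, zero_mul]
    · rw [Finset.mem_range] at hi
      rw [ih (m - i) (by omega), mul_zero]

lemma HT.mul_pow {h W : ℂ → ℂ} {ch ca : ℕ → ℂ} (hh : HT h ch) (hW : HT W ca) :
    ∀ s, HT (fun z => h z * W z ^ s) (csAux ca ch s) := by
  intro s
  induction s with
  | zero => exact hh.congr (Filter.Eventually.of_forall fun z => by simp)
  | succ s ih =>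
    refine (hW.mul' ih).congr (Filter.Eventually.of_forall fun z => ?_)
    show W z * (h z * W z ^ s) = h z * W z ^ (s + 1)
    rw [pow_succ]
    ring

lemma csAux_entry {n : ℕ} (a q : Fin n → ℂ) (ca ch : ℕ → ℂ)
    (ha0 : ca 0 = 0) (hh0 : ch 0 = 0)
    (ha : ∀ j : Fin n, ca (j.1+1) = a j) (hq : ∀ j : Fin n, ch (j.1+1) = q j) :
    ∀ s (j : Fin n), csAux ca ch s (j.1+1) = ((toeplitzA a ^ s).mulVec q) j := by
  intro s
  induction s with
  | zero => intro j; rw [pow_zero, Matrix.one_mulVec]; exact hq j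
  | succ s ih =>
    intro j
    have hjn := j.isLt
    rw [pow_succ', ← Matrix.mulVec_mulVec]
    set v : Fin n → ℂ := (toeplitzA a ^ s).mulVec q with hv
    show convSeq ca (csAux ca ch s) (j.1+1) = (toeplitzA a).mulVec v j
    have hRHS : (toeplitzA a).mulVec v j
        = ∑ l ∈ Finset.univ.filter (fun l : Fin n => l.1 < j.1), toeplitzA a j l * v l := by
      rw [Finset.sum_filter_of_ne]
      · rfl
      · intro l _ hne
        by_contra hlt
        apply hne
        rw [toeplitzA, Matrix.of_apply, dif_neg hlt, zero_mul]
    have hsub : ∑ i ∈ Finset.range (j.1+1+1), ca i * csAux ca ch s (j.1+1 - i)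
        = ∑ i ∈ Finset.Ioc 0 j.1, ca i * csAux ca ch s (j.1+1 - i) := by
      refine (Finset.sum_subset (fun x hx => ?_) (fun x hx hnx => ?_)).symm
      · rw [Finset.mem_Ioc] at hx; rw [Finset.mem_range]; omega
      · rw [Finset.mem_range] at hx
        rw [Finset.mem_Ioc] at hnx
        rcases Nat.eq_zero_or_pos x with h0 | h0
        · rw [h0, ha0, zero_mul]
        · have : x = j.1 + 1 := by omega
          rw [this, Nat.sub_self, csAux_eq_zero ca ch ha0 hh0 s 0 (Nat.zero_le s), mul_zero]
    rw [hRHS, convSeq, hsub]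
    refine Finset.sum_nbij' (fun m => (⟨j.1 - m, by omega⟩ : Fin n))
        (fun l => j.1 - l.1) ?_ ?_ ?_ ?_ ?_
    · intro m hm
      rw [Finset.mem_Ioc] at hm
      simp only [Finset.mem_filter, Finset.mem_univ, true_and]
      omega
    · intro l hl
      simp only [Finset.mem_filter, Finset.mem_univ, true_and] at hl
      simp only [Finset.mem_Ioc]
      omega
    · intro m hm
      rw [Finset.mem_Ioc] at hm
      dsimp only
      omega
    · intro l hl
      simp only [Finset.mem_filter, Finset.mem_univ, true_and] at hl
      ext
      simp only
      omega
    · intro m hm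
      rw [Finset.mem_Ioc] at hm
      have h1 : ca m = a ⟨m - 1, by omega⟩ := by
        rw [← ha ⟨m - 1, by omega⟩]
        congr 1
        show m = m - 1 + 1
        omega
      have h2 : toeplitzA a j ⟨j.1 - m, by omega⟩ = a ⟨m - 1, by omega⟩ := by
        rw [toeplitzA, Matrix.of_apply, dif_pos (by omega : j.1 - m < j.1)]
        congr 1
        ext
        simp only
        omega
      have h3 : csAux ca ch s (j.1 + 1 - m) = v ⟨j.1 - m, by omega⟩ := by
        have heq : j.1 + 1 - m = (j.1 - m) + 1 := by omega
        rw [heq]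
        exact ih ⟨j.1 - m, by omega⟩
      rw [h1, h2, h3]

/-- with `a` the first `n` Taylor coefficients of `w` and `q` those of
`z/w'(z)`, the `k`-th Taylor coefficient of
`(z/w'(z))·[(e^{iu}+w)/(e^{iu}-w) + 2e^{iu}w/(e^{iu}-w)²]` equals
`q_k + 2∑_{s=1}^{k-1} e^{-isu}(s+1)(A(a)^s q)_k`. -/
theorem taylorCoeff_adjoint_rhs
    (n : ℕ) (w : ℂ → ℂ)
    (hw : DifferentiableOn ℂ w (ball (0 : ℂ) 1)) (hw0 : w 0 = 0)
    (hbd : ∀ z ∈ ball (0 : ℂ) 1, ‖w z‖ < 1)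
    (hnz : ∀ z ∈ ball (0 : ℂ) 1, deriv w z ≠ 0)
    (a q : Fin n → ℂ)
    (ha : ∀ k : Fin n, a k = taylorCoeff w (k.1 + 1))
    (hq : ∀ k : Fin n, q k = taylorCoeff (fun z => z / deriv w z) (k.1 + 1)) :
    ∀ u : ℝ, ∀ k : Fin n,
      taylorCoeff (fun z => (z / deriv w z) *
          (lkernel (w z) u +
            2 * Complex.exp ((u : ℂ) * Complex.I) * w z /
              (Complex.exp ((u : ℂ) * Complex.I) - w z) ^ 2)) (k.1 + 1)
        = q k + 2 * ∑ s ∈ Finset.Icc 1 (k.1 : ℕ),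
            Complex.exp (-(s : ℂ) * (u : ℂ) * Complex.I) * ((s : ℂ) + 1) *
              ((toeplitzA a ^ s).mulVec q) k := by
  intro u k
  have h0 : (0:ℂ) ∈ ball (0 : ℂ) 1 := by simp
  have hball : ball (0:ℂ) 1 ∈ nhds (0:ℂ) := Metric.ball_mem_nhds 0 one_pos
  have hw_an : AnalyticAt ℂ w 0 := hw.analyticAt hball
  have hw' : AnalyticAt ℂ (deriv w) 0 := ((hw.analyticOnNhd isOpen_ball).deriv) 0 h0
  have hh_an : AnalyticAt ℂ (fun z => z / deriv w z) 0 := by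
    exact (analyticAt_id.div hw' (hnz 0 h0))
  set c : ℂ := Complex.exp ((u : ℂ) * Complex.I) with hcdef
  have hc : c ≠ 0 := Complex.exp_ne_zero _
  set K : ℕ := k.1 with hKdef
  set R : ℂ → ℂ := fun z => (((K:ℂ)+2) - ((K:ℂ)+1) * (w z * c⁻¹)) *
      ((1 - w z * c⁻¹)⁻¹)^2 with hRdef
  have hR_an : AnalyticAt ℂ R 0 := by
    apply AnalyticAt.mul
    · exact analyticAt_const.sub (analyticAt_const.mul (hw_an.mul analyticAt_const))
    · exact ((analyticAt_const.sub (hw_an.mul analyticAt_const)).inv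
        (by simp [hw0])).pow 2
  set h : ℂ → ℂ := fun z => z / deriv w z with hhdef
  set ca : ℕ → ℂ := fun m => taylorCoeff w m with hcadef
  set ch : ℕ → ℂ := fun m => taylorCoeff h m with hchdef
  set cr : ℕ → ℂ := fun m => taylorCoeff R m with hcrdef
  have hwt : HT w ca := hw_an.ht
  have hht : HT h ch := hh_an.ht
  have hrt : HT R cr := hR_an.ht
  have hca0 : ca 0 = 0 := by simp [hcadef, taylorCoeff, hw0]
  have hch0 : ch 0 = 0 := by simp [hchdef, hhdef, taylorCoeff]
  have hmulpow : ∀ s, HT (fun z => h z * w z ^ s) (csAux ca ch s) := hht.mul_pow hwt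
  -- the expanded target function
  set F : ℂ → ℂ := fun z =>
    (h z + ∑ s ∈ Finset.Icc 1 K, (2 * ((s:ℂ)+1) * c⁻¹ ^ s) * (h z * w z ^ s))
      + (2 * c⁻¹ ^ (K+1)) * ((h z * w z ^ (K+1)) * R z) with hFdef
  set cF : ℕ → ℂ := fun m =>
    (ch m + ∑ s ∈ Finset.Icc 1 K, (2 * ((s:ℂ)+1) * c⁻¹ ^ s) * csAux ca ch s m)
      + (2 * c⁻¹ ^ (K+1)) * convSeq (csAux ca ch (K+1)) cr m with hcFdef
  have hF : HT F cF := by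
    refine HT.add (HT.add hht ?_) (HT.const_mul _ ((hmulpow (K+1)).mul' hrt))
    exact HT.finset_sum _ _ _ (fun s _ => HT.const_mul _ (hmulpow s))
  have hev : F =ᶠ[nhds (0:ℂ)] fun z => (z / deriv w z) *
      (lkernel (w z) u + 2 * c * w z / (c - w z) ^ 2) := by
    have hcont : ContinuousAt w 0 := hw_an.continuousAt
    have hprei : w ⁻¹' ball (0:ℂ) 1 ∈ nhds (0:ℂ) := by
      apply hcont
      rw [hw0]
      exact Metric.ball_mem_nhds 0 one_pos
    filter_upwards [hprei] with z hz
    rw [Set.mem_preimage, mem_ball_zero_iff] at hz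
    have hb := bracket_eq K u (w z) (by simpa using hz)
    show (h z + _) + _ = h z * _
    rw [← hcdef] at hb
    rw [hb, mul_add, mul_add, mul_one, Finset.mul_sum]
    congr 1
    · congr 1
      refine Finset.sum_congr rfl fun s _ => ?_
      ring
    · show (2 * c⁻¹ ^ (K+1)) * ((h z * w z ^ (K+1)) * R z) = _
      rw [hRdef]
      ring
  have hG : HT (fun z => (z / deriv w z) *
      (lkernel (w z) u + 2 * c * w z / (c - w z) ^ 2)) cF := hF.congr hev
  rw [hG.taylorCoeff_eq (k.1 + 1)]
  -- now compute the coefficient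
  have hconv0 : convSeq (csAux ca ch (K+1)) cr (K+1) = 0 := by
    rw [convSeq]
    refine Finset.sum_eq_zero fun i hi => ?_
    rw [Finset.mem_range] at hi
    rw [csAux_eq_zero ca ch hca0 hch0 (K+1) i (by omega), zero_mul]
  have hchN : ch (k.1 + 1) = q k := (hq k).symm
  show (ch (k.1+1) + ∑ s ∈ Finset.Icc 1 K, (2 * ((s:ℂ)+1) * c⁻¹ ^ s) * csAux ca ch s (k.1+1))
      + (2 * c⁻¹ ^ (K+1)) * convSeq (csAux ca ch (K+1)) cr (k.1+1) = _
  rw [hchN, hconv0, mul_zero, add_zero, Finset.mul_sum]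
  congr 1
  refine Finset.sum_congr rfl fun s _ => ?_
  rw [csAux_entry a q ca ch hca0 hch0 (fun j => (ha j).symm) (fun j => (hq j).symm) s k]
  have hexp : Complex.exp (-(s : ℂ) * (u : ℂ) * Complex.I) = c⁻¹ ^ s := by
    rw [show (-(s : ℂ) * (u : ℂ) * Complex.I) = (s : ℕ) * (-((u:ℂ) * Complex.I)) by
      push_cast; ring]
    rw [Complex.exp_nat_mul, Complex.exp_neg, hcdef]
  rw [hexp]
  ring
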